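/- Let R be a ring, M a left R-module with flat cover φ: F → M. For the quiver • → •, the representation morphism from (0 → F) to (0 → M) given by (0, φ) is a categorical flat cover of the representation 0 → M, where a representation A → B is categorical flat iff A and B are flat and A → B is a pure monomorphism. -/

import Mathlib

/-- A linear map `g : A → B` is a pure monomorphism if `L ⊗ A → L ⊗ B` is
injective for every module `L`. -/
def IsPureMono {R A B : Type} [CommRing R] [AddCommGroup A] [Module R A]
    [AddCommGroup B] [Module R B] (g : A →ₗ[R] B) : Prop :=
  ∀ (L : Type) [AddCommGroup L] [Module R L],
    Function.Injective (LinearMap.lTensor L g)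

open LinearMap in
/-- If `g : A → B` is a pure monomorphism and `B` is flat, then `B ⧸ range g` is flat. -/
lemma flat_quotient_of_pure {R A B : Type} [CommRing R] [AddCommGroup A] [Module R A]
    [AddCommGroup B] [Module R B] (g : A →ₗ[R] B) (hB : Module.Flat R B)
    (hp : IsPureMono g) : Module.Flat R (B ⧸ LinearMap.range g) := by
  rw [Module.Flat.iff_rTensor_injective']
  intro I
  set π := (LinearMap.range g).mkQ with hπdef
  have hπsurj : Function.Surjective π := Submodule.mkQ_surjective _
  have hπg : Function.Exact g π := g.exact_map_mkQ_range
  rw [injective_iff_map_eq_zero]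
  intro x hx
  obtain ⟨y, rfl⟩ := LinearMap.lTensor_surjective I hπsurj x
  have h1 : lTensor R π (rTensor B I.subtype y) = rTensor _ I.subtype (lTensor I π y) := by
    rw [← LinearMap.comp_apply, ← LinearMap.comp_apply, lTensor_comp_rTensor, rTensor_comp_lTensor]
  rw [hx] at h1
  have hexB : Function.Exact (lTensor R g) (lTensor R π) := lTensor_exact R hπg hπsurj
  obtain ⟨v, hv⟩ := (hexB _).mp h1
  have h2 : lTensor (R ⧸ I) g (rTensor A I.mkQ v) = 0 := by
    have : rTensor B I.mkQ (lTensor R g v) = lTensor _ g (rTensor A I.mkQ v) := by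
      rw [← LinearMap.comp_apply, ← LinearMap.comp_apply, lTensor_comp_rTensor, rTensor_comp_lTensor]
    rw [hv, ← LinearMap.comp_apply, ← rTensor_comp] at this
    rw [← this]
    have : I.mkQ ∘ₗ I.subtype = 0 := by
      ext ⟨i, hi⟩
      simpa using Ideal.Quotient.eq_zero_iff_mem.mpr hi
    rw [this]
    simp
  have h3 : rTensor A I.mkQ v = 0 := by
    have := hp (R ⧸ I)
    rw [injective_iff_map_eq_zero] at this
    exact this _ h2
  have hexA : Function.Exact (rTensor A I.subtype) (rTensor A I.mkQ) :=
    rTensor_exact A (LinearMap.exact_subtype_mkQ I) (Submodule.mkQ_surjective I)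
  obtain ⟨z, hz⟩ := (hexA _).mp h3
  have h4 : rTensor B I.subtype (lTensor I g z) = rTensor B I.subtype y := by
    have : rTensor B I.subtype (lTensor I g z) = lTensor R g (rTensor A I.subtype z) := by
      rw [← LinearMap.comp_apply, ← LinearMap.comp_apply, lTensor_comp_rTensor, rTensor_comp_lTensor]
    rw [this, hz, hv]
  have hinj : Function.Injective (rTensor B I.subtype) :=
    Module.Flat.iff_rTensor_injective'.mp hB I
  have h5 : lTensor I g z = y := hinj h4
  rw [← h5, ← LinearMap.comp_apply, ← lTensor_comp]
  have : π ∘ₗ g = 0 := by ext a; simp [hπdef, Submodule.Quotient.mk_eq_zero]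
  rw [this, lTensor_zero]
  simp

/-- Let `φ : F → M` be a flat cover of the module `M`.  For the
quiver `• → •`, the representation morphism `(0, φ) : (0 → F) ⟶ (0 → M)` is a
categorical flat cover of `0 → M`, where a representation `A → B` is
categorical flat iff `A`, `B` are flat and `A → B` is a pure monomorphism:
every morphism from a categorical flat representation `(A →g B)` to `(0 → M)`
factors through `(0, φ)`, and every compatible endomorphism of `(0 → F)` is an
automorphism. -/
theorem stmt17 {R : Type} [CommRing R] (M F : Type)
    [AddCommGroup M] [Module R M] [AddCommGroup F] [Module R F]
    (φ : F →ₗ[R] M) (hF : Module.Flat R F)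
    (hprecov : ∀ (G : Type) [AddCommGroup G] [Module R G], Module.Flat R G →
        ∀ g : G →ₗ[R] M, ∃ h : G →ₗ[R] F, φ ∘ₗ h = g)
    (hcov : ∀ f : F →ₗ[R] F, φ ∘ₗ f = φ → Function.Bijective f) :
    (∀ (A B : Type) [AddCommGroup A] [Module R A] [AddCommGroup B] [Module R B],
        ∀ (g : A →ₗ[R] B), Module.Flat R A → Module.Flat R B → IsPureMono g →
        ∀ (β : B →ₗ[R] M), β ∘ₗ g = 0 →
        ∃ β' : B →ₗ[R] F, β' ∘ₗ g = 0 ∧ φ ∘ₗ β' = β) ∧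
    (∀ β : F →ₗ[R] F, φ ∘ₗ β = φ → Function.Bijective β) := by
  refine ⟨?_, hcov⟩
  intro A B _ _ _ _ g hA hB hpure β hβg
  have hCflat := flat_quotient_of_pure g hB hpure
  have hle : LinearMap.range g ≤ LinearMap.ker β := by
    rintro _ ⟨a, rfl⟩
    have := congrArg (fun f => f a) hβg
    simpa using this
  set βbar := (LinearMap.range g).liftQ β hle with hβbar
  obtain ⟨h, hh⟩ := hprecov (B ⧸ LinearMap.range g) hCflat βbar
  refine ⟨h ∘ₗ (LinearMap.range g).mkQ, ?_, ?_⟩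
  · ext a
    have : Submodule.Quotient.mk (p := LinearMap.range g) (g a) = 0 :=
      (Submodule.Quotient.mk_eq_zero _).mpr ⟨a, rfl⟩
    simp [this]
  · rw [← LinearMap.comp_assoc, hh, hβbar, Submodule.liftQ_mkQ]
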